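/- For every p ≥ 1 there exists a constant c_p such that for all x, y ∈ 𝕋² with x ≠ y, the quantity ∑_{k ∈ ℤ²\{0}} |k|^{-4} min(1, |k·(x−y)|²) is bounded by c |x−y|² log(8π |x−y|^{-1}). -/

import Mathlib

open scoped ENNReal Real

/-- Euclidean norm of a lattice point in `ℤ²`. -/
noncomputable def latNorm (m : ℤ × ℤ) : ℝ :=
  Real.sqrt ((m.1 : ℝ)^2 + (m.2 : ℝ)^2)

namespace CovAux

open Real Finset

/-- Bernoulli-type inequality: `(1-y)^(-δ) ≥ 1 + δ y`. -/
lemma one_add_le_rpow_neg {δ y : ℝ} (hδ : 0 ≤ δ) (hy0 : 0 ≤ y) (hy1 : y < 1) :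
    1 + δ * y ≤ (1 - y) ^ (-δ) := by
  have h1 : (0:ℝ) < 1 - y := by linarith
  have hP : 0 < (1 - y) ^ δ := Real.rpow_pos_of_pos h1 δ
  have h2 : (1 - y) ^ δ ≤ Real.exp (-(δ * y)) := by
    rw [Real.rpow_def_of_pos h1]
    apply Real.exp_le_exp.mpr
    have hlog : Real.log (1 - y) ≤ -y := by
      have := Real.log_le_sub_one_of_pos h1
      linarith
    nlinarith [mul_le_mul_of_nonneg_right hlog hδ]
  have h3 : (1 + δ * y) * Real.exp (-(δ * y)) ≤ 1 := by
    have he : 1 + δ * y ≤ Real.exp (δ * y) := by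
      have := Real.add_one_le_exp (δ * y)
      linarith
    have hee : Real.exp (δ * y) * Real.exp (-(δ * y)) = 1 := by
      rw [← Real.exp_add]; simp
    have hpos : 0 < Real.exp (-(δ * y)) := Real.exp_pos _
    nlinarith
  have h4 : (1 + δ * y) * (1 - y) ^ δ ≤ 1 := by
    have hnn : 0 ≤ 1 + δ * y := by positivity
    nlinarith
  rw [Real.rpow_neg h1.le, ← one_div]
  rw [le_div_iff₀ hP]
  linarith

/-- Key telescoping step for the zeta-type bound. -/
lemma key_step {δ : ℝ} (hδ : 0 < δ) {n : ℕ} (hn : 1 ≤ n) :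
    δ * ((n:ℝ) + 1) ^ (-(1+δ)) ≤ (n:ℝ) ^ (-δ) - ((n:ℝ) + 1) ^ (-δ) := by
  have hm1 : (1:ℝ) ≤ (n:ℝ) := by exact_mod_cast hn
  set m : ℝ := (n : ℝ) with hm
  have hM : (0:ℝ) < m + 1 := by linarith
  have hy0 : (0:ℝ) ≤ 1 / (m + 1) := by positivity
  have hy1 : 1 / (m + 1) < 1 := by
    rw [div_lt_one hM]; linarith
  have hber := one_add_le_rpow_neg hδ.le hy0 hy1
  have hfact : m = (m + 1) * (1 - 1 / (m + 1)) := by field_simp; ring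
  have hsplit : m ^ (-δ) = (m + 1) ^ (-δ) * (1 - 1 / (m + 1)) ^ (-δ) := by
    conv_lhs => rw [hfact]
    rw [Real.mul_rpow hM.le (by linarith)]
  have hMpow : 0 < (m + 1) ^ (-δ) := Real.rpow_pos_of_pos hM _
  have hexp : (m + 1) ^ (-(1+δ)) = (m + 1) ^ (-δ) * (m + 1)⁻¹ := by
    rw [show -(1+δ) = -δ + -1 by ring, Real.rpow_add hM, Real.rpow_neg_one]
  have hmain : (m + 1) ^ (-δ) * (1 + δ * (1 / (m + 1))) ≤ m ^ (-δ) := by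
    rw [hsplit]
    exact mul_le_mul_of_nonneg_left hber hMpow.le
  rw [hexp]
  have h5 : (m + 1) ^ (-δ) * (1 + δ * (1 / (m + 1)))
      = (m + 1) ^ (-δ) + δ * ((m + 1) ^ (-δ) * (m + 1)⁻¹) := by
    rw [one_div]; ring
  linarith [hmain]

/-- Partial sums of `n^{-(1+δ)}` are bounded by `1 + 1/δ`. -/
lemma real_zeta_partial {δ : ℝ} (hδ : 0 < δ) (N : ℕ) :
    ∑ n ∈ range N, ((n:ℝ)) ^ (-(1+δ)) ≤ 1 + 1 / δ := by
  have hne : -(1+δ) ≠ 0 := neg_ne_zero.mpr (by positivity)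
  have key : ∀ M : ℕ, 1 ≤ M → ∑ n ∈ range (M + 1), ((n:ℝ)) ^ (-(1+δ))
      ≤ 1 + (1 - ((M:ℝ)) ^ (-δ)) / δ := by
    intro M hM
    induction M, hM using Nat.le_induction with
    | base =>
      rw [Finset.sum_range_succ, Finset.sum_range_one]
      rw [Nat.cast_zero, Nat.cast_one, Real.zero_rpow hne, Real.one_rpow, Real.one_rpow]
      norm_num
    | succ M hM ih =>
      rw [Finset.sum_range_succ]
      have hks := key_step hδ (n := M) hM
      push_cast
      have hdiv : ((M:ℝ) + 1) ^ (-(1+δ)) ≤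
          (((M:ℝ)) ^ (-δ) - ((M:ℝ) + 1) ^ (-δ)) / δ := by
        rw [le_div_iff₀ hδ]
        nlinarith [hks]
      have hring : (1 - ((M:ℝ)) ^ (-δ)) / δ +
          (((M:ℝ)) ^ (-δ) - ((M:ℝ) + 1) ^ (-δ)) / δ
          = (1 - ((M:ℝ) + 1) ^ (-δ)) / δ := by
        ring
      linarith [ih]
  rcases N with - | M
  · simp; positivity
  · rcases Nat.lt_or_ge M 1 with hM | hM
    · interval_cases M
      rw [Finset.sum_range_one, Nat.cast_zero, Real.zero_rpow hne]
      positivity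
    · refine (key M hM).trans ?_
      have h1 : (0:ℝ) ≤ ((M:ℝ)) ^ (-δ) := Real.rpow_nonneg (by positivity) _
      have h2 : (1 - ((M:ℝ)) ^ (-δ)) / δ ≤ 1 / δ := by
        gcongr
        linarith
      linarith

/-- Quantitative zeta bound in `ℝ≥0∞`. -/
lemma zeta_ennreal {δ : ℝ} (hδ : 0 < δ) :
    ∑' n : ℕ, ENNReal.ofReal ((n:ℝ) ^ (-(1+δ))) ≤ ENNReal.ofReal (1 + 1 / δ) := by
  rw [ENNReal.tsum_eq_iSup_nat]
  refine iSup_le fun N => ?_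
  have : ∑ a ∈ range N, ENNReal.ofReal ((a:ℝ) ^ (-(1+δ)))
      = ENNReal.ofReal (∑ a ∈ range N, ((a:ℝ)) ^ (-(1+δ))) := by
    rw [ENNReal.ofReal_sum_of_nonneg]
    intro i _
    exact Real.rpow_nonneg (Nat.cast_nonneg i) _
  rw [this]
  exact ENNReal.ofReal_le_ofReal (real_zeta_partial hδ N)

/-- `n * n^{-(2+δ)} = n^{-(1+δ)}` in `ℝ≥0∞` (including `n = 0`). -/
lemma nat_mul_g2 {δ : ℝ} (hδ : 0 < δ) (n : ℕ) :
    (n : ℝ≥0∞) * ENNReal.ofReal ((n:ℝ) ^ (-(2+δ))) = ENNReal.ofReal ((n:ℝ) ^ (-(1+δ))) := by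
  rcases Nat.eq_zero_or_pos n with rfl | hn
  · simp only [Nat.cast_zero, zero_mul]
    rw [Real.zero_rpow (neg_ne_zero.mpr (by positivity : (1:ℝ)+δ ≠ 0)), ENNReal.ofReal_zero]
  · have hnR : (0:ℝ) < (n:ℝ) := by exact_mod_cast hn
    rw [← ENNReal.ofReal_natCast n, ← ENNReal.ofReal_mul (Nat.cast_nonneg n)]
    congr 1
    have : (n:ℝ) * (n:ℝ) ^ (-(2+δ)) = (n:ℝ) ^ ((1:ℝ) + -(2+δ)) := by
      rw [Real.rpow_add hnR, Real.rpow_one]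
    rw [this]
    norm_num
    ring_nf

/-- Sum over `ℤ` of a function of `natAbs` is at most twice the sum over `ℕ`. -/
lemma tsum_int_natAbs_le (H : ℕ → ℝ≥0∞) :
    ∑' a : ℤ, H a.natAbs ≤ 2 * ∑' n : ℕ, H n := by
  rw [tsum_of_nat_of_neg_add_one ENNReal.summable ENNReal.summable]
  have h1 : ∀ n : ℕ, ((n:ℤ)).natAbs = n := fun n => Int.natAbs_natCast n
  have h2 : ∀ n : ℕ, ((-((n:ℤ) + 1))).natAbs = n + 1 := by
    intro n
    rw [Int.natAbs_neg]
    exact_mod_cast Int.natAbs_natCast (n + 1)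
  simp only [h1, h2]
  have hcomp : ∑' n : ℕ, H (n + 1) ≤ ∑' n : ℕ, H n :=
    ENNReal.tsum_comp_le_tsum_of_injective (fun a b h => by omega) H
  rw [two_mul]
  exact add_le_add le_rfl hcomp

/-- Fiber-counting bound: sum over `ℕ × ℕ` of `g (max m n)`. -/
lemma pair_bound {δ : ℝ} (hδ : 0 < δ) :
    ∑' q : ℕ × ℕ, ENNReal.ofReal (((max q.1 q.2 : ℕ):ℝ) ^ (-(2+δ)))
      ≤ 3 * ENNReal.ofReal (1 + 1 / δ) := by
  set g2 : ℕ → ℝ≥0∞ := fun n => ENNReal.ofReal ((n:ℝ) ^ (-(2+δ))) with hg2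
  have hsplit : ∀ m n : ℕ, g2 (max m n)
      = (if n < m then g2 m else 0) + (if m ≤ n then g2 n else 0) := by
    intro m n
    rcases lt_or_ge n m with h | h
    · rw [max_eq_left h.le, if_pos h, if_neg (not_le.mpr h), add_zero]
    · rw [max_eq_right h, if_neg (not_lt.mpr h), if_pos h, zero_add]
  have hrow : ∀ m : ℕ, ∑' n : ℕ, (if n < m then g2 m else 0) = (m : ℝ≥0∞) * g2 m := by
    intro m
    rw [tsum_eq_sum (s := Finset.range m) (fun b hb => if_neg (by simpa using hb))]
    rw [Finset.sum_congr rfl (fun b hb => if_pos (Finset.mem_range.mp hb))]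
    rw [Finset.sum_const, Finset.card_range, nsmul_eq_mul]
  have hcol : ∀ n : ℕ, ∑' m : ℕ, (if m ≤ n then g2 n else 0) = ((n:ℝ≥0∞) + 1) * g2 n := by
    intro n
    rw [tsum_eq_sum (s := Finset.range (n + 1))
      (fun b hb => if_neg (by simp at hb; omega))]
    rw [Finset.sum_congr rfl (fun b hb => if_pos (by simp at hb; omega))]
    rw [Finset.sum_const, Finset.card_range, nsmul_eq_mul]
    push_cast
    ring
  calc ∑' q : ℕ × ℕ, g2 (max q.1 q.2)
      = ∑' m : ℕ, ∑' n : ℕ, g2 (max m n) := ENNReal.tsum_prod'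
    _ = ∑' m : ℕ, ∑' n : ℕ,
          ((if n < m then g2 m else 0) + (if m ≤ n then g2 n else 0)) := by
        simp_rw [hsplit]
    _ = ∑' m : ℕ, ((∑' n : ℕ, (if n < m then g2 m else 0))
          + ∑' n : ℕ, (if m ≤ n then g2 n else 0)) := by
        simp_rw [ENNReal.tsum_add]
    _ = (∑' m : ℕ, (m : ℝ≥0∞) * g2 m)
          + ∑' m : ℕ, ∑' n : ℕ, (if m ≤ n then g2 n else 0) := by
        rw [ENNReal.tsum_add]
        simp_rw [hrow]
    _ = (∑' m : ℕ, (m : ℝ≥0∞) * g2 m) + ∑' n : ℕ, ((n:ℝ≥0∞) + 1) * g2 n := by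
        rw [ENNReal.tsum_comm (f := fun m n => (if m ≤ n then g2 n else 0))]
        simp_rw [hcol]
    _ ≤ (∑' m : ℕ, (m : ℝ≥0∞) * g2 m) + ∑' n : ℕ, 2 * ((n:ℝ≥0∞) * g2 n) := by
        refine add_le_add le_rfl (ENNReal.tsum_le_tsum fun n => ?_)
        rcases Nat.eq_zero_or_pos n with rfl | hn
        · have hz : g2 0 = 0 := by
            simp only [hg2, Nat.cast_zero]
            rw [Real.zero_rpow (neg_ne_zero.mpr (by positivity : (2:ℝ)+δ ≠ 0)),
              ENNReal.ofReal_zero]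
          simp [hz]
        · have h2n : ((n:ℝ≥0∞) + 1) ≤ 2 * (n:ℝ≥0∞) := by
            rw [two_mul]
            exact add_le_add le_rfl (by exact_mod_cast Nat.one_le_cast.mpr hn)
          calc ((n:ℝ≥0∞) + 1) * g2 n ≤ 2 * (n:ℝ≥0∞) * g2 n := mul_le_mul_left h2n _
            _ = 2 * ((n:ℝ≥0∞) * g2 n) := mul_assoc _ _ _
    _ = (∑' m : ℕ, (m : ℝ≥0∞) * g2 m) + 2 * ∑' n : ℕ, ((n:ℝ≥0∞) * g2 n) := by
        rw [ENNReal.tsum_mul_left]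
    _ ≤ ENNReal.ofReal (1 + 1 / δ) + 2 * ENNReal.ofReal (1 + 1 / δ) := by
        have hz : ∑' m : ℕ, (m : ℝ≥0∞) * g2 m ≤ ENNReal.ofReal (1 + 1 / δ) := by
          calc ∑' m : ℕ, (m : ℝ≥0∞) * g2 m
              = ∑' m : ℕ, ENNReal.ofReal ((m:ℝ) ^ (-(1+δ))) := by
                refine tsum_congr fun m => nat_mul_g2 hδ m
            _ ≤ _ := zeta_ennreal hδ
        exact add_le_add hz (mul_le_mul_right hz 2)
    _ = 3 * ENNReal.ofReal (1 + 1 / δ) := by ring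

/-- Lattice-sum bound over `ℤ × ℤ`. -/
lemma lattice_bound {δ : ℝ} (hδ : 0 < δ) :
    ∑' k : ℤ × ℤ, ENNReal.ofReal (((max k.1.natAbs k.2.natAbs : ℕ):ℝ) ^ (-(2+δ)))
      ≤ ENNReal.ofReal (12 * (1 + 1 / δ)) := by
  set g2 : ℕ → ℝ≥0∞ := fun n => ENNReal.ofReal ((n:ℝ) ^ (-(2+δ))) with hg2
  calc ∑' k : ℤ × ℤ, g2 (max k.1.natAbs k.2.natAbs)
      = ∑' a : ℤ, ∑' b : ℤ, g2 (max a.natAbs b.natAbs) := ENNReal.tsum_prod'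
    _ ≤ ∑' a : ℤ, 2 * ∑' n : ℕ, g2 (max a.natAbs n) :=
        ENNReal.tsum_le_tsum fun a => tsum_int_natAbs_le (fun b => g2 (max a.natAbs b))
    _ = 2 * ∑' a : ℤ, ∑' n : ℕ, g2 (max a.natAbs n) := ENNReal.tsum_mul_left
    _ ≤ 2 * (2 * ∑' m : ℕ, ∑' n : ℕ, g2 (max m n)) :=
        mul_le_mul_right (tsum_int_natAbs_le (fun m => ∑' n : ℕ, g2 (max m n))) 2
    _ = 4 * ∑' q : ℕ × ℕ, g2 (max q.1 q.2) := by
        rw [show (∑' q : ℕ × ℕ, g2 (max q.1 q.2)) = ∑' m : ℕ, ∑' n : ℕ, g2 (max m n)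
          from ENNReal.tsum_prod']
        ring
    _ ≤ 4 * (3 * ENNReal.ofReal (1 + 1 / δ)) := mul_le_mul_right (pair_bound hδ) 4
    _ = ENNReal.ofReal (12 * (1 + 1 / δ)) := by
        rw [ENNReal.ofReal_mul (by norm_num : (0:ℝ) ≤ 12)]
        rw [show ENNReal.ofReal 12 = (12:ℝ≥0∞) by
          rw [ENNReal.ofReal_ofNat]]
        ring

/-- `min 1 u ≤ u ^ s` for `0 ≤ u` and `s ∈ (0,1]`. -/
lemma min_one_le_rpow {u s : ℝ} (hu : 0 ≤ u) (hs0 : 0 < s) (hs1 : s ≤ 1) :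
    min 1 u ≤ u ^ s := by
  rcases le_total u 1 with h | h
  · rw [min_eq_right h]
    rcases eq_or_lt_of_le hu with h0 | h0
    · rw [← h0, Real.zero_rpow hs0.ne']
    · calc u = u ^ (1:ℝ) := (Real.rpow_one u).symm
        _ ≤ u ^ s := Real.rpow_le_rpow_of_exponent_ge h0 h hs1
  · rw [min_eq_left h]
    calc (1:ℝ) = u ^ (0:ℝ) := (Real.rpow_zero u).symm
      _ ≤ u ^ s := Real.rpow_le_rpow_of_exponent_le h hs0.le

set_option maxHeartbeats 1000000 in
/-- The pointwise interpolation bound. -/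
lemma pointwise {δ t : ℝ} (hδ0 : 0 < δ) (hδ1 : δ ≤ 1) (ht : 0 < t)
    (hT : t ^ (-δ) ≤ 3) (k : ℤ × ℤ) (hk : k ≠ 0) {z : ℝ}
    (hz : |z| ≤ 2 * ((max k.1.natAbs k.2.natAbs : ℕ) : ℝ) * t) :
    latNorm k ^ (-(4:ℝ)) * min 1 (z ^ 2) ≤
      12 * t ^ 2 * ((max k.1.natAbs k.2.natAbs : ℕ) : ℝ) ^ (-(2+δ)) := by
  set nN : ℕ := max k.1.natAbs k.2.natAbs with hnN
  set n : ℝ := (nN : ℝ) with hn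
  have hn1 : 1 ≤ n := by
    have : 1 ≤ nN := by
      by_contra h
      push_neg at h
      interval_cases nN
      have h1 : k.1.natAbs = 0 ∧ k.2.natAbs = 0 := by omega
      exact hk (Prod.ext (Int.natAbs_eq_zero.mp h1.1) (Int.natAbs_eq_zero.mp h1.2))
    rw [hn]
    exact_mod_cast this
  have hn0 : 0 < n := lt_of_lt_of_le one_pos hn1
  -- `n ≤ latNorm k`
  have habs1 : (k.1.natAbs : ℝ) = |(k.1 : ℝ)| := by
    rw [Nat.cast_natAbs, Int.cast_abs]
  have habs2 : (k.2.natAbs : ℝ) = |(k.2 : ℝ)| := by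
    rw [Nat.cast_natAbs, Int.cast_abs]
  have hsq : n ^ 2 ≤ (k.1 : ℝ) ^ 2 + (k.2 : ℝ) ^ 2 := by
    have : n = max (|(k.1 : ℝ)|) (|(k.2 : ℝ)|) := by
      rw [hn, hnN, Nat.cast_max, habs1, habs2]
    rw [this]
    rcases max_cases (|(k.1 : ℝ)|) (|(k.2 : ℝ)|) with ⟨he, -⟩ | ⟨he, -⟩ <;>
      rw [he] <;> rw [sq_abs] <;> nlinarith [sq_nonneg ((k.1:ℝ)), sq_nonneg ((k.2:ℝ))]
  have hlat : n ≤ latNorm k := by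
    rw [latNorm]
    calc n = Real.sqrt (n ^ 2) := (Real.sqrt_sq hn0.le).symm
      _ ≤ _ := Real.sqrt_le_sqrt hsq
  have hlat0 : 0 < latNorm k := lt_of_lt_of_le hn0 hlat
  -- antitone in the base for the negative power
  have h1 : latNorm k ^ (-(4:ℝ)) ≤ n ^ (-(4:ℝ)) := by
    rw [Real.rpow_neg hlat0.le, Real.rpow_neg hn0.le]
    have h4 : n ^ (4:ℝ) ≤ latNorm k ^ (4:ℝ) := Real.rpow_le_rpow hn0.le hlat (by norm_num)
    have hp : 0 < n ^ (4:ℝ) := Real.rpow_pos_of_pos hn0 _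
    exact inv_anti₀ hp h4
  set s : ℝ := 1 - δ / 2 with hs
  have hs0 : 0 < s := by rw [hs]; linarith
  have hs1 : s ≤ 1 := by rw [hs]; linarith
  -- interpolation on the min
  have h2 : min 1 (z ^ 2) ≤ (z ^ 2) ^ s := min_one_le_rpow (sq_nonneg z) hs0 hs1
  have hzsq : z ^ 2 ≤ (2 * n * t) ^ 2 := by
    have h0 : 0 ≤ 2 * n * t := by positivity
    nlinarith [sq_abs z, abs_nonneg z]
  have h3 : (z ^ 2) ^ s ≤ ((2 * n * t) ^ 2) ^ s :=
    Real.rpow_le_rpow (sq_nonneg z) hzsq hs0.le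
  -- compute `((2nt)^2)^s ≤ 12 * t^2 * n^(2s)`
  have hfact : ((2 * n * t) ^ 2 : ℝ) = 4 * n ^ 2 * t ^ 2 := by ring
  have hsplit : ((2 * n * t) ^ 2) ^ s = (4:ℝ) ^ s * (n ^ 2) ^ s * (t ^ 2) ^ s := by
    rw [hfact, Real.mul_rpow (by positivity) (sq_nonneg t),
      Real.mul_rpow (by norm_num) (sq_nonneg n)]
  have h4s : (4:ℝ) ^ s ≤ 4 := by
    calc (4:ℝ) ^ s ≤ (4:ℝ) ^ (1:ℝ) := Real.rpow_le_rpow_of_exponent_le (by norm_num) hs1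
      _ = 4 := Real.rpow_one 4
  have hns : (n ^ 2) ^ s = n ^ (2 * s) := by
    rw [← Real.rpow_two, ← Real.rpow_mul hn0.le]
  have hts : (t ^ 2) ^ s ≤ 3 * t ^ 2 := by
    have : (t ^ 2) ^ s = t ^ 2 * t ^ (-δ) := by
      rw [← Real.rpow_two, ← Real.rpow_mul ht.le,
        show (2:ℝ) * s = 2 + -δ by rw [hs]; ring, Real.rpow_add ht, Real.rpow_two]
    rw [this]
    nlinarith [sq_nonneg t, Real.rpow_pos_of_pos ht (-δ)]
  have h4 : ((2 * n * t) ^ 2) ^ s ≤ 12 * t ^ 2 * n ^ (2 * s) := by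
    rw [hsplit, hns]
    have hb : (0:ℝ) ≤ n ^ (2 * s) := Real.rpow_nonneg hn0.le _
    have hc : (0:ℝ) ≤ (t ^ 2) ^ s := Real.rpow_nonneg (sq_nonneg t) _
    have step1 : (4:ℝ) ^ s * n ^ (2 * s) ≤ 4 * n ^ (2 * s) :=
      mul_le_mul_of_nonneg_right h4s hb
    have step2 : (4:ℝ) ^ s * n ^ (2 * s) * (t ^ 2) ^ s ≤ 4 * n ^ (2 * s) * (3 * t ^ 2) :=
      mul_le_mul step1 hts hc (by positivity)
    calc (4:ℝ) ^ s * n ^ (2 * s) * (t ^ 2) ^ s ≤ 4 * n ^ (2 * s) * (3 * t ^ 2) := step2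
      _ = 12 * t ^ 2 * n ^ (2 * s) := by ring
  -- combine
  have hmin : min 1 (z ^ 2) ≤ 12 * t ^ 2 * n ^ (2 * s) := h2.trans (h3.trans h4)
  have hminnn : (0:ℝ) ≤ min 1 (z ^ 2) := le_min zero_le_one (sq_nonneg z)
  calc latNorm k ^ (-(4:ℝ)) * min 1 (z ^ 2)
      ≤ n ^ (-(4:ℝ)) * (12 * t ^ 2 * n ^ (2 * s)) := by
        apply mul_le_mul h1 hmin hminnn (Real.rpow_nonneg hn0.le _)
    _ = 12 * t ^ 2 * (n ^ (-(4:ℝ)) * n ^ (2 * s)) := by ring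
    _ = 12 * t ^ 2 * n ^ (-(2+δ)) := by
        rw [← Real.rpow_add hn0,
          show -(4:ℝ) + 2 * s = -(2+δ) by rw [hs]; ring]

end CovAux

set_option maxHeartbeats 1000000 in
/-- Kernel estimate for the covariance of increments of the stochastic convolution:
for every `p ≥ 1` there is `c` such that for all distinct `x, y` in the torus,
`∑_{k ≠ 0} |k|^{-4} min(1, |k·(x-y)|²) ≤ c |x-y|² log(8π |x-y|⁻¹)`. -/
theorem covariance_increment_estimate (p : ℝ) (hp : 1 ≤ p) :
    ∃ c : ℝ, 0 < c ∧ ∀ x y : ℝ × ℝ, x ≠ y →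
      ‖x - y‖ ≤ 2 * π * Real.sqrt 2 →
      (∑' k : {k : ℤ × ℤ // k ≠ 0},
        ENNReal.ofReal (latNorm k.1 ^ (-(4:ℝ)) *
          min 1 (((k.1.1 : ℝ) * (x.1 - y.1) + (k.1.2 : ℝ) * (x.2 - y.2)) ^ 2)))
        ≤ ENNReal.ofReal
            (c * ‖x - y‖ ^ 2 * Real.log (8 * π * ‖x - y‖⁻¹)) := by
  refine ⟨288, by norm_num, fun x y hxy hle => ?_⟩
  set t : ℝ := ‖x - y‖ with htdef
  have ht : 0 < t := norm_pos_iff.mpr (sub_ne_zero.mpr hxy)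
  set L : ℝ := Real.log (8 * π * t⁻¹) with hLdef
  have hsqrt2 : Real.sqrt 2 * Real.sqrt 2 = 2 := Real.mul_self_sqrt (by norm_num)
  have hsqrt2nn : 0 ≤ Real.sqrt 2 := Real.sqrt_nonneg 2
  have hpi : 3.14 < π := Real.pi_gt_d2
  have hexp2 : Real.exp 1 ≤ 2 * Real.sqrt 2 := by
    nlinarith [Real.exp_one_lt_d9, Real.exp_pos 1]
  have hL1 : 1 ≤ L := by
    rw [hLdef, Real.le_log_iff_exp_le (by positivity)]
    have h8 : 8 * π * t⁻¹ = 8 * π / t := by ring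
    rw [h8, le_div_iff₀ ht]
    calc Real.exp 1 * t ≤ (2 * Real.sqrt 2) * (2 * π * Real.sqrt 2) := by
          apply mul_le_mul hexp2 hle ht.le (by positivity)
      _ = 8 * π := by nlinarith [hsqrt2]
  have hL0 : 0 < L := lt_of_lt_of_le one_pos hL1
  set δ : ℝ := 1 / L with hδdef
  have hδ0 : 0 < δ := by positivity
  have hδ1 : δ ≤ 1 := by
    rw [hδdef, div_le_one hL0]; exact hL1
  have hT : t ^ (-δ) ≤ 3 := by
    rw [Real.rpow_def_of_pos ht]
    have hlog : Real.log t * (-δ) ≤ 1 := by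
      have h1 : Real.log t⁻¹ ≤ L := by
        rw [hLdef]
        apply Real.log_le_log (by positivity)
        nlinarith [inv_pos.mpr ht]
      have h2 : Real.log t * (-δ) = Real.log t⁻¹ / L := by
        rw [Real.log_inv, hδdef]; ring
      rw [h2, div_le_one hL0]
      exact h1
    calc Real.exp (Real.log t * (-δ)) ≤ Real.exp 1 := Real.exp_le_exp.mpr hlog
      _ ≤ 3 := by nlinarith [Real.exp_one_lt_d9]
  -- distance components
  have hd1 : |x.1 - y.1| ≤ t := by
    rw [htdef, Prod.norm_def]
    exact le_max_of_le_left (le_of_eq (Real.norm_eq_abs _).symm) |>.trans_eq rfl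
  have hd2 : |x.2 - y.2| ≤ t := by
    rw [htdef, Prod.norm_def]
    exact le_max_of_le_right (le_of_eq (Real.norm_eq_abs _).symm)
  -- pointwise bound for each k
  have hpt : ∀ k : {k : ℤ × ℤ // k ≠ 0},
      ENNReal.ofReal (latNorm k.1 ^ (-(4:ℝ)) *
        min 1 (((k.1.1 : ℝ) * (x.1 - y.1) + (k.1.2 : ℝ) * (x.2 - y.2)) ^ 2))
      ≤ ENNReal.ofReal (12 * t ^ 2 *
          ((max k.1.1.natAbs k.1.2.natAbs : ℕ) : ℝ) ^ (-(2+δ))) := by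
    intro k
    apply ENNReal.ofReal_le_ofReal
    apply CovAux.pointwise hδ0 hδ1 ht hT k.1 k.2
    set z : ℝ := (k.1.1 : ℝ) * (x.1 - y.1) + (k.1.2 : ℝ) * (x.2 - y.2) with hzdef
    have ha1 : |(k.1.1 : ℝ)| ≤ ((max k.1.1.natAbs k.1.2.natAbs : ℕ) : ℝ) := by
      calc |(k.1.1 : ℝ)| = ((k.1.1.natAbs : ℕ) : ℝ) := by
            rw [Nat.cast_natAbs, Int.cast_abs]
        _ ≤ _ := Nat.cast_le.mpr (le_max_left _ _)
    have ha2 : |(k.1.2 : ℝ)| ≤ ((max k.1.1.natAbs k.1.2.natAbs : ℕ) : ℝ) := by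
      calc |(k.1.2 : ℝ)| = ((k.1.2.natAbs : ℕ) : ℝ) := by
            rw [Nat.cast_natAbs, Int.cast_abs]
        _ ≤ _ := Nat.cast_le.mpr (le_max_right _ _)
    calc |z| ≤ |(k.1.1 : ℝ) * (x.1 - y.1)| + |(k.1.2 : ℝ) * (x.2 - y.2)| := abs_add_le _ _
      _ = |(k.1.1 : ℝ)| * |x.1 - y.1| + |(k.1.2 : ℝ)| * |x.2 - y.2| := by
          rw [abs_mul, abs_mul]
      _ ≤ ((max k.1.1.natAbs k.1.2.natAbs : ℕ) : ℝ) * t +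
          ((max k.1.1.natAbs k.1.2.natAbs : ℕ) : ℝ) * t := by
          apply add_le_add <;>
            apply mul_le_mul (by assumption) (by assumption) (abs_nonneg _) (Nat.cast_nonneg _)
      _ = 2 * ((max k.1.1.natAbs k.1.2.natAbs : ℕ) : ℝ) * t := by ring
  -- assemble
  refine le_trans (ENNReal.tsum_le_tsum hpt) ?_
  refine le_trans (ENNReal.tsum_comp_le_tsum_of_injective Subtype.val_injective
    (fun k : ℤ × ℤ => ENNReal.ofReal (12 * t ^ 2 *
      ((max k.1.natAbs k.2.natAbs : ℕ) : ℝ) ^ (-(2+δ))))) ?_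
  have hfac : ∀ k : ℤ × ℤ, ENNReal.ofReal (12 * t ^ 2 *
      ((max k.1.natAbs k.2.natAbs : ℕ) : ℝ) ^ (-(2+δ)))
      = ENNReal.ofReal (12 * t ^ 2) *
        ENNReal.ofReal (((max k.1.natAbs k.2.natAbs : ℕ) : ℝ) ^ (-(2+δ))) := by
    intro k
    rw [← ENNReal.ofReal_mul (by positivity)]
  calc ∑' k : ℤ × ℤ, ENNReal.ofReal (12 * t ^ 2 *
          ((max k.1.natAbs k.2.natAbs : ℕ) : ℝ) ^ (-(2+δ)))
      = ENNReal.ofReal (12 * t ^ 2) * ∑' k : ℤ × ℤ,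
          ENNReal.ofReal (((max k.1.natAbs k.2.natAbs : ℕ) : ℝ) ^ (-(2+δ))) := by
        rw [← ENNReal.tsum_mul_left]
        exact tsum_congr hfac
    _ ≤ ENNReal.ofReal (12 * t ^ 2) * ENNReal.ofReal (12 * (1 + 1 / δ)) :=
        mul_le_mul_right (CovAux.lattice_bound hδ0) _
    _ = ENNReal.ofReal ((12 * t ^ 2) * (12 * (1 + 1 / δ))) :=
        (ENNReal.ofReal_mul (by positivity)).symm
    _ ≤ ENNReal.ofReal (288 * t ^ 2 * L) := by
        apply ENNReal.ofReal_le_ofReal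
        have hinv : 1 / δ = L := by
          rw [hδdef, one_div_one_div]
        rw [hinv]
        nlinarith [sq_nonneg t, hL1]
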